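/- Suppose every Y_ℓ satisfies Re(Z_ℓ) ≻ 0 with Y_ℓ = Z_ℓ⁻¹ and Z_ℓ symmetric, every Y_t has Re(Y_t) ⪰ 0, the branch graph is weakly connected, and at least one shunt admittance matrix Y_t is invertible with Re(Y_t) ≻ 0. Then the compound admittance matrix Y = (A^P)ᵀ Y_L A^P + Y_T is invertible. -/
import Mathlib

open Matrix Kronecker

/-- Block-diagonal matrix with blocks `f i` indexed by `ι × P`. -/
def blockDiag {ι P : Type*} [DecidableEq ι] (f : ι → Matrix P P ℂ) :
    Matrix (ι × P) (ι × P) ℂ :=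
  fun a b => if a.1 = b.1 then f a.1 a.2 b.2 else 0

/-- `Re M ≻ 0` via the `x* Re`-form on complex vectors. -/
def RePDc {m : Type*} [Fintype m] (M : Matrix m m ℂ) : Prop :=
  ∀ x : m → ℂ, x ≠ 0 → 0 < (star x ⬝ᵥ M.mulVec x).re

/-- `Re M ⪰ 0` via the `x* Re`-form on complex vectors. -/
def RePSDc {m : Type*} [Fintype m] (M : Matrix m m ℂ) : Prop :=
  ∀ x : m → ℂ, 0 ≤ (star x ⬝ᵥ M.mulVec x).re

lemma RePDc.inv {m : Type*} [Fintype m] [DecidableEq m] {Z : Matrix m m ℂ}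
    (hpd : RePDc Z) (hinv : IsUnit Z) : RePDc Z⁻¹ := by
  intro x hx
  have hdet : IsUnit Z.det := (Matrix.isUnit_iff_isUnit_det Z).mp hinv
  set y : m → ℂ := Z⁻¹ *ᵥ x with hy
  have hZy : Z *ᵥ y = x := by
    rw [hy, Matrix.mulVec_mulVec, Matrix.mul_nonsing_inv _ hdet, Matrix.one_mulVec]
  have hyne : y ≠ 0 := by
    intro h
    apply hx
    rw [← hZy, h, Matrix.mulVec_zero]
  have : star x ⬝ᵥ Z⁻¹ *ᵥ x = star (star y ⬝ᵥ Z *ᵥ y) := by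
    rw [← hy, star_dotProduct, ← hZy]
  rw [this, Complex.star_def, Complex.conj_re]
  exact hpd y hyne

lemma RePDc.rePSDc {m : Type*} [Fintype m] {M : Matrix m m ℂ}
    (h : RePDc M) : RePSDc M := by
  intro x
  by_cases hx : x = 0
  · simp [hx]
  · exact le_of_lt (h x hx)

lemma blockDiag_form {ι P : Type*} [Fintype ι] [Fintype P] [DecidableEq ι]
    (f : ι → Matrix P P ℂ) (y : ι × P → ℂ) :
    star y ⬝ᵥ (blockDiag f) *ᵥ y
      = ∑ i : ι, star (fun p => y (i, p)) ⬝ᵥ (f i) *ᵥ (fun p => y (i, p)) := by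
  simp only [dotProduct, mulVec, _root_.blockDiag, Fintype.sum_prod_type, Pi.star_apply]
  refine Finset.sum_congr rfl fun i _ => Finset.sum_congr rfl fun p _ => ?_
  congr 1
  rw [Finset.sum_comm]
  refine Finset.sum_congr rfl fun q _ => ?_
  simp [ite_mul, Finset.sum_ite_eq]

theorem compound_admittance_invertible
    {E N P : Type*} [Fintype E] [Fintype N] [Fintype P]
    [DecidableEq E] [DecidableEq N] [DecidableEq P]
    (head tail : E → N) (hht : ∀ e, head e ≠ tail e)
    (A : Matrix E N ℝ)
    (hA : ∀ e v, A e v = if v = head e then 1 else if v = tail e then -1 else 0)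
    (hconn : ∀ v w : N, Relation.ReflTransGen
      (fun a b => ∃ e, (head e = a ∧ tail e = b) ∨ (head e = b ∧ tail e = a)) v w)
    (Yl : E → Matrix P P ℂ) (Zl : E → Matrix P P ℂ)
    (hZsym : ∀ ℓ, (Zl ℓ)ᵀ = Zl ℓ)
    (hZpd : ∀ ℓ, RePDc (Zl ℓ))
    (hZinv : ∀ ℓ, IsUnit (Zl ℓ))
    (hYZ : ∀ ℓ, Yl ℓ = (Zl ℓ)⁻¹)
    (Yt : N → Matrix P P ℂ)
    (hYt : ∀ t, RePSDc (Yt t))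
    (t₀ : N) (ht₀inv : IsUnit (Yt t₀)) (ht₀pd : RePDc (Yt t₀)) :
    IsUnit (((A.map (Complex.ofReal)) ⊗ₖ (1 : Matrix P P ℂ))ᵀ * blockDiag Yl *
      ((A.map (Complex.ofReal)) ⊗ₖ (1 : Matrix P P ℂ)) + blockDiag Yt) := by
  set B : Matrix (E × P) (N × P) ℂ := (A.map (Complex.ofReal)) ⊗ₖ (1 : Matrix P P ℂ) with hB
  set Y : Matrix (N × P) (N × P) ℂ := Bᵀ * blockDiag Yl * B + blockDiag Yt with hYdef
  have hYlpd : ∀ ℓ, RePDc (Yl ℓ) := fun ℓ => by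
    rw [hYZ ℓ]; exact (hZpd ℓ).inv (hZinv ℓ)
  have hBreal : ∀ i j, star (B i j) = B i j := by
    rintro ⟨e, p⟩ ⟨v, q⟩
    simp only [hB, kroneckerMap_apply, Matrix.map_apply, Matrix.one_apply]
    by_cases h : p = q <;> simp [h]
  -- B *ᵥ x computed
  have hBmul : ∀ (x : N × P → ℂ) (e : E) (p : P),
      (B *ᵥ x) (e, p) = x (head e, p) - x (tail e, p) := by
    intro x e p
    have h1 : ∀ v : N, ∀ q : P, B (e, p) (v, q) = if q = p then (A e v : ℂ) else 0 := by
      intro v q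
      simp only [hB, kroneckerMap_apply, Matrix.map_apply, Matrix.one_apply]
      by_cases h : p = q <;> simp [h, eq_comm]
    have h2 : (B *ᵥ x) (e, p) = ∑ v : N, (A e v : ℂ) * x (v, p) := by
      simp only [mulVec, dotProduct, Fintype.sum_prod_type]
      refine Finset.sum_congr rfl fun v _ => ?_
      rw [Finset.sum_eq_single p]
      · rw [h1]; simp
      · intro q _ hq; rw [h1]; simp [hq]
      · intro h; exact absurd (Finset.mem_univ p) h
    rw [h2]
    have hsplit : ∀ v : N, (A e v : ℂ) * x (v, p)
        = (if v = head e then x (head e, p) else 0)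
          + (if v = tail e then - x (tail e, p) else 0) := by
      intro v
      rw [hA]
      by_cases h1 : v = head e <;> by_cases h2 : v = tail e
      · exact absurd (h1 ▸ h2 : head e = tail e) (hht e)
      · subst h1; simp [h2, hht e]
      · subst h2; simp [h1, (hht e).symm]
      · simp [h1, h2]
    simp only [hsplit, Finset.sum_add_distrib, Finset.sum_ite_eq', Finset.mem_univ, if_true]
    ring
  -- quadratic form positivity
  have hform : ∀ x : N × P → ℂ, x ≠ 0 → 0 < (star x ⬝ᵥ Y *ᵥ x).re := by
    intro x hx
    have hsplit : star x ⬝ᵥ Y *ᵥ x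
        = star (B *ᵥ x) ⬝ᵥ (blockDiag Yl) *ᵥ (B *ᵥ x) + star x ⬝ᵥ (blockDiag Yt) *ᵥ x := by
      rw [hYdef, Matrix.add_mulVec, dotProduct_add]
      congr 1
      rw [← Matrix.mulVec_mulVec, ← Matrix.mulVec_mulVec, Matrix.dotProduct_mulVec,
        Matrix.vecMul_transpose]
      congr 1
      funext i
      simp only [mulVec, dotProduct, Pi.star_apply, star_sum, star_mul', hBreal]
    -- sums of nonneg terms
    have hL : ∀ e : E,
        0 ≤ (star (fun p => (B *ᵥ x) (e, p)) ⬝ᵥ (Yl e) *ᵥ (fun p => (B *ᵥ x) (e, p))).re :=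
      fun e => (hYlpd e).rePSDc _
    have hT : ∀ t : N,
        0 ≤ (star (fun p => x (t, p)) ⬝ᵥ (Yt t) *ᵥ (fun p => x (t, p))).re :=
      fun t => hYt t _
    have hre : (star x ⬝ᵥ Y *ᵥ x).re
        = (∑ e : E, (star (fun p => (B *ᵥ x) (e, p)) ⬝ᵥ (Yl e) *ᵥ (fun p => (B *ᵥ x) (e, p))).re)
          + (∑ t : N, (star (fun p => x (t, p)) ⬝ᵥ (Yt t) *ᵥ (fun p => x (t, p))).re) := by
      rw [hsplit, Complex.add_re, blockDiag_form, blockDiag_form, Complex.re_sum, Complex.re_sum]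
    rw [hre]
    by_cases h0 : (fun p => x (t₀, p)) = 0
    · -- find an edge with a nonzero voltage difference
      obtain ⟨⟨v, p₀⟩, hv⟩ : ∃ a, x a ≠ 0 := by
        by_contra h
        push_neg at h
        exact hx (funext h)
      have key : ∀ w, Relation.ReflTransGen
          (fun a b => ∃ e, (head e = a ∧ tail e = b) ∨ (head e = b ∧ tail e = a)) t₀ w →
          (∀ p, x (w, p) = 0) ∨ ∃ e p, x (head e, p) ≠ x (tail e, p) := by
        intro w hpath
        induction hpath with
        | refl => exact Or.inl (fun p => congrFun h0 p)
        | @tail b c _ hbc ih =>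
          rcases ih with hb | hw
          · by_cases hc : ∀ p, x (c, p) = 0
            · exact Or.inl hc
            · push_neg at hc
              obtain ⟨p, hp⟩ := hc
              obtain ⟨e, he⟩ := hbc
              refine Or.inr ⟨e, p, ?_⟩
              rcases he with ⟨h1, h2⟩ | ⟨h1, h2⟩
              · rw [h1, h2, hb p]; exact fun h => hp h.symm
              · rw [h1, h2, hb p]; exact hp
          · exact Or.inr hw
      rcases key v (hconn t₀ v) with hzero | ⟨e, p, hep⟩
      · exact absurd (hzero p₀) hv
      · have hBe : (fun p => (B *ᵥ x) (e, p)) ≠ 0 := by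
          intro h
          apply hep
          have h' := congrFun h p
          simp only [Pi.zero_apply, hBmul] at h'
          exact sub_eq_zero.mp h'
        have hpos := hYlpd e _ hBe
        have h1 : 0 < ∑ e : E, (star (fun p => (B *ᵥ x) (e, p)) ⬝ᵥ (Yl e) *ᵥ
            (fun p => (B *ᵥ x) (e, p))).re :=
          Finset.sum_pos' (fun e _ => hL e) ⟨e, Finset.mem_univ e, hpos⟩
        have h2 : 0 ≤ ∑ t : N, (star (fun p => x (t, p)) ⬝ᵥ (Yt t) *ᵥ (fun p => x (t, p))).re :=
          Finset.sum_nonneg fun t _ => hT t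
        linarith
    · have hpos := ht₀pd _ h0
      have h2 : 0 < ∑ t : N, (star (fun p => x (t, p)) ⬝ᵥ (Yt t) *ᵥ (fun p => x (t, p))).re :=
        Finset.sum_pos' (fun t _ => hT t) ⟨t₀, Finset.mem_univ t₀, hpos⟩
      have h1 : 0 ≤ ∑ e : E, (star (fun p => (B *ᵥ x) (e, p)) ⬝ᵥ (Yl e) *ᵥ
          (fun p => (B *ᵥ x) (e, p))).re :=
        Finset.sum_nonneg fun e _ => hL e
      linarith
  -- conclude invertibility
  rw [Matrix.isUnit_iff_isUnit_det, isUnit_iff_ne_zero]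
  intro hdet
  obtain ⟨v, hv, hYv⟩ := Matrix.exists_mulVec_eq_zero_iff.mpr hdet
  have := hform v hv
  rw [hYv] at this
  simp at this
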